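/- arXiv:1305.4171 — 6 statements merged into one kernel-verified Lean document; each statement's English description precedes it below -/
import Mathlib

section
/- Let C be a convex cone in a real topological vector space, Y a real Hausdorff topological vector space, K ⊆ C a convex compact subset, and {φ_α}_{α∈I} a family of lower semicontinuous, ℚ₊-homogeneous, superadditive correspondences φ_α : C ⇉ Y with nonempty values. If for each x ∈ K the set ⋃_α φ_α(x) is bounded in Y, then ⋃_α φ_α(K) = ⋃_{α, x∈K} φ_α(x) is bounded in Y. -/
open Pointwise

/-- Lemma 1: a pointwise bounded family of lower semicontinuous,
`ℚ₊`-homogeneous, superadditive correspondences is uniformly bounded on every convex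
compact subset `K` of the cone `C`. -/
theorem uniform_boundedness_superadditive
    {X : Type*} [AddCommGroup X] [Module ℝ X] [TopologicalSpace X]
    [IsTopologicalAddGroup X] [ContinuousSMul ℝ X]
    {Y : Type*} [AddCommGroup Y] [Module ℝ Y] [TopologicalSpace Y]
    [IsTopologicalAddGroup Y] [ContinuousSMul ℝ Y] [T2Space Y]
    (C : Set X)
    (hCadd : ∀ x ∈ C, ∀ y ∈ C, x + y ∈ C)
    (hCsmul : ∀ (t : ℝ), 0 < t → ∀ x ∈ C, t • x ∈ C)
    (K : Set X) (hKC : K ⊆ C) (hKconv : Convex ℝ K) (hKcpt : IsCompact K)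
    {I : Type*} (φ : I → X → Set Y)
    (hne : ∀ α, ∀ x ∈ C, (φ α x).Nonempty)
    (hsuper : ∀ α, ∀ x ∈ C, ∀ y ∈ C, φ α x + φ α y ⊆ φ α (x + y))
    (hQhom : ∀ α (r : ℚ), 0 < r → ∀ x ∈ C, φ α ((r : ℝ) • x) = (r : ℝ) • φ α x)
    (hlsc : ∀ α, ∀ x ∈ C, ∀ U : Set Y, IsOpen U → (φ α x ∩ U).Nonempty →
      ∃ V : Set X, IsOpen V ∧ x ∈ V ∧ ∀ y ∈ V ∩ C, (φ α y ∩ U).Nonempty)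
    (hptbdd : ∀ x ∈ K, Bornology.IsVonNBounded ℝ (⋃ α, φ α x)) :
    Bornology.IsVonNBounded ℝ (⋃ α, ⋃ x ∈ K, φ α x) := by
  classical
  rcases K.eq_empty_or_nonempty with hKemp | ⟨x₁, hx₁⟩
  · simp [hKemp, Bornology.isVonNBounded_empty]
  rw [(nhds_basis_closed_balanced ℝ Y).isVonNBounded_iff]
  rintro U ⟨hU0, hUcl, hUbal⟩
  -- shrink : closed balanced U' with U' + U' ⊆ U
  obtain ⟨W₁, hW₁0, hW₁⟩ := exists_nhds_zero_half hU0
  obtain ⟨U', ⟨hU'0, hU'cl, hU'bal⟩, hU'W⟩ :=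
    (nhds_basis_closed_balanced ℝ Y).mem_iff.mp hW₁0
  haveI : CompactSpace K := isCompact_iff_compactSpace.mp hKcpt
  haveI : Nonempty K := ⟨⟨x₁, hx₁⟩⟩
  set G : ℕ → Set K := fun n => {p | ∀ α, φ α p.1 ⊆ ((n : ℝ) + 1) • U'} with hG
  have hGclosed : ∀ n, IsClosed (G n) := by
    intro n
    rw [← isOpen_compl_iff, isOpen_iff_forall_mem_open]
    intro p hp
    simp only [hG, Set.mem_compl_iff, Set.mem_setOf_eq, not_forall] at hp
    obtain ⟨α, hα⟩ := hp
    have hcl : IsClosed (((n : ℝ) + 1) • U') := hU'cl.smul_of_ne_zero (by positivity)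
    rw [Set.not_subset] at hα
    obtain ⟨y0, hy01, hy02⟩ := hα
    obtain ⟨V, hVopen, hpV, hV⟩ :=
      hlsc α p.1 (hKC p.2) _ hcl.isOpen_compl ⟨y0, hy01, hy02⟩
    refine ⟨Subtype.val ⁻¹' V, ?_, hVopen.preimage continuous_subtype_val, hpV⟩
    intro q hq
    simp only [hG, Set.mem_compl_iff, Set.mem_setOf_eq, not_forall]
    obtain ⟨y, hy1, hy2⟩ := hV q.1 ⟨hq, hKC q.2⟩
    exact ⟨α, fun h => hy2 (h hy1)⟩
  have hGcover : ⋃ n, G n = Set.univ := by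
    ext p
    simp only [Set.mem_iUnion, Set.mem_univ, iff_true]
    obtain ⟨r, hr⟩ := absorbs_iff_norm.mp (hptbdd p.1 p.2 hU'0)
    obtain ⟨n, hn⟩ := exists_nat_ge r
    refine ⟨n, fun α => (Set.subset_iUnion (fun β => φ β p.1) α).trans (hr _ ?_)⟩
    rw [Real.norm_eq_abs, abs_of_pos (by positivity)]
    linarith
  obtain ⟨n, q0, hq0⟩ := nonempty_interior_of_iUnion_of_closed hGclosed hGcover
  obtain ⟨T, hTsub, hTopen, hpT⟩ := mem_interior.mp hq0
  obtain ⟨V, hVopen, rfl⟩ := isOpen_induced_iff.mp hTopen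
  set x₀ : X := q0.1 with hx₀def
  have hx₀K : x₀ ∈ K := q0.2
  have hx₀V : x₀ ∈ V := hpT
  set c : ℝ := (n : ℝ) + 1 with hcdef
  have hc : 0 < c := by positivity
  have hbound : ∀ x ∈ V ∩ K, ∀ α, φ α x ⊆ c • U' := fun x hx α =>
    hTsub (show (⟨x, hx.2⟩ : K) ∈ Subtype.val ⁻¹' V from hx.1) α
  have hx₀bdd : ∀ α, φ α x₀ ⊆ c • U' := hTsub hpT
  -- tube lemma argument
  set g : ℝ × X → X := fun q => x₀ + q.1 • (q.2 - x₀) with hgdef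
  have hgcont : Continuous g := by fun_prop
  have hmem : g ⁻¹' V ∈ nhdsSet (({0} : Set ℝ) ×ˢ K) := by
    refine (hVopen.preimage hgcont).mem_nhdsSet.mpr ?_
    rintro ⟨t, x⟩ ⟨ht, hx⟩
    simp only [Set.mem_singleton_iff] at ht
    simp [hgdef, ht, hx₀V]
  rw [isCompact_singleton.nhdsSet_prod_eq hKcpt, nhdsSet_singleton] at hmem
  obtain ⟨A, hA, B, hB, hAB⟩ := Filter.mem_prod_iff.mp hmem
  obtain ⟨ε, hε, hball⟩ := Metric.mem_nhds_iff.mp hA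
  obtain ⟨r, hr0, hr1⟩ := exists_rat_btwn (show (0 : ℝ) < min ε 1 by positivity)
  have hr0' : 0 < r := by exact_mod_cast hr0
  have hrR : (0 : ℝ) < (r : ℝ) := by exact_mod_cast hr0'
  have hrε : (r : ℝ) < ε := lt_of_lt_of_le hr1 (min_le_left _ _)
  have hrlt1 : (r : ℝ) < 1 := lt_of_lt_of_le hr1 (min_le_right _ _)
  set s : ℚ := 1 - r with hsdef
  have hs0 : 0 < s := by
    have : r < 1 := by exact_mod_cast hrlt1
    simpa [hsdef] using this
  have hscast : (s : ℝ) = 1 - (r : ℝ) := by push_cast [hsdef]; ring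
  set t : ℝ := (r : ℝ)⁻¹ * c with htdef
  have ht : 0 < t := by positivity
  have hmain : (⋃ α, ⋃ x ∈ K, φ α x) ⊆ t • U := by
    rintro y hy
    simp only [Set.mem_iUnion] at hy
    obtain ⟨α, x, hxK, hyφ⟩ := hy
    set z : X := (s : ℝ) • x₀ + (r : ℝ) • x with hzdef
    have hzV : z ∈ V := by
      have hmemAB : ((r : ℝ), x) ∈ A ×ˢ B := by
        refine ⟨hball ?_, subset_of_mem_nhdsSet hB hxK⟩
        simp only [Metric.mem_ball, Real.dist_eq, sub_zero, abs_of_pos hrR]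
        exact hrε
      have := hAB hmemAB
      simp only [Set.mem_preimage, hgdef] at this
      have hzeq : z = x₀ + (r : ℝ) • (x - x₀) := by
        rw [hzdef, hscast]; module
      rwa [← hzeq] at this
    have hsR : (0 : ℝ) < (s : ℝ) := by exact_mod_cast hs0
    have hzK : z ∈ K := by
      have h3 : (s : ℝ) + (r : ℝ) = 1 := by rw [hscast]; ring
      exact hKconv hx₀K hxK hsR.le hrR.le h3
    have hzbdd : φ α z ⊆ c • U' := hbound z ⟨hzV, hzK⟩ α
    obtain ⟨u, hu⟩ := hne α x₀ (hKC hx₀K)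
    have hx₀C := hKC hx₀K
    have hxC := hKC hxK
    have key : (s : ℝ) • u + (r : ℝ) • y ∈ φ α z := by
      rw [hzdef]
      apply hsuper α _ (hCsmul _ hsR _ hx₀C) _ (hCsmul _ hrR _ hxC)
      apply Set.add_mem_add
      · rw [hQhom α s hs0 x₀ hx₀C]; exact Set.smul_mem_smul_set hu
      · rw [hQhom α r hr0' x hxC]; exact Set.smul_mem_smul_set hyφ
    obtain ⟨w₁, hw₁, hw₁e⟩ := hzbdd key
    obtain ⟨w₂, hw₂, hw₂e⟩ := hx₀bdd α hu
    have hw₁e' : c • w₁ = (s : ℝ) • u + (r : ℝ) • y := hw₁e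
    have hw₂e' : c • w₂ = u := hw₂e
    have hry : (r : ℝ) • y = c • (w₁ + (-(s : ℝ)) • w₂) := by
      have h0 : c • (w₁ + (-(s : ℝ)) • w₂) = c • w₁ - (s : ℝ) • (c • w₂) := by
        module
      rw [h0, hw₁e', hw₂e']; module
    have hwU : w₁ + (-(s : ℝ)) • w₂ ∈ U := by
      refine hW₁ _ (hU'W hw₁) _ (hU'W ?_)
      refine hU'bal.smul_mem ?_ hw₂
      rw [Real.norm_eq_abs, abs_neg, abs_of_pos hsR, hscast]
      linarith
    refine ⟨w₁ + (-(s : ℝ)) • w₂, hwU, ?_⟩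
    show ((r : ℝ)⁻¹ * c) • (w₁ + (-(s : ℝ)) • w₂) = y
    rw [mul_smul, ← hry, smul_smul, inv_mul_cancel₀ (ne_of_gt hrR), one_smul]
  refine Absorbs.of_norm ⟨t, fun b hb => hmain.trans (hUbal.smul_mono ?_)⟩
  rwa [Real.norm_eq_abs, abs_of_pos ht]
end

section
/- Let C be a convex cone with finite cone-basis E = {e₁,…,eₙ} in a real topological vector space, L the linear span of E, and Y a real finite-dimensional topological vector space. If φ : C → cc(Y) is lower semicontinuous and ℚ₊-homogeneous superadditive, then φ is positively homogeneous: φ(tx) = tφ(x) for all t > 0 and all x ∈ C. -/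
open Pointwise

/-- Supremum of a linear image of a scaled set. -/
lemma sSup_image_smul_set_aux {Y : Type*} [AddCommGroup Y] [Module ℝ Y] [TopologicalSpace Y]
    (f : Y →L[ℝ] ℝ) (r : ℝ) (hr : 0 < r) (A : Set Y) (hAne : A.Nonempty)
    (hbdd : BddAbove (f '' A)) :
    sSup (f '' (r • A)) = r * sSup (f '' A) := by
  have himg : f '' (r • A) = (fun y => r * y) '' (f '' A) := by
    rw [← Set.image_smul, Set.image_image, Set.image_image]
    simp [map_smul]
  rw [himg]
  have hmono : Monotone (fun y : ℝ => r * y) := fun a b hab =>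
    mul_le_mul_of_nonneg_left hab hr.le
  have := hmono.map_csSup_of_continuousAt
    ((continuous_const.mul continuous_id).continuousAt) (hAne.image f) hbdd
  exact this.symm

/-- Two nonempty compact convex sets in a finite-dimensional real T2 TVS with
the same support functions are equal. -/
lemma eq_of_forall_sSup_image_eq
    {Y : Type*} [AddCommGroup Y] [Module ℝ Y] [TopologicalSpace Y]
    [IsTopologicalAddGroup Y] [ContinuousSMul ℝ Y] [T2Space Y] [FiniteDimensional ℝ Y]
    {A B : Set Y} (hAc : IsCompact A) (hAv : Convex ℝ A) (hAne : A.Nonempty)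
    (hBc : IsCompact B) (hBv : Convex ℝ B) (hBne : B.Nonempty)
    (h : ∀ f : Y →L[ℝ] ℝ, sSup (f '' A) = sSup (f '' B)) : A = B := by
  set eu := toEuclidean (E := Y) with heu
  have key : ∀ (P Q : Set Y), IsCompact P → IsCompact Q → Convex ℝ Q → Q.Nonempty →
      (∀ f : Y →L[ℝ] ℝ, sSup (f '' P) = sSup (f '' Q)) → P ⊆ Q := by
    intro P Q hPc hQc hQv hQne hPQ
    intro a ha
    by_contra hnot
    have hnot' : eu a ∉ eu '' Q := by
      rintro ⟨b, hb, hba⟩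
      exact hnot (eu.injective hba ▸ hb)
    have hQ'c : IsClosed (eu '' Q) := (hQc.image eu.continuous).isClosed
    have hQ'v : Convex ℝ (eu '' Q) := by
      have := hQv.linear_image (eu.toContinuousLinearMap.toLinearMap)
      simpa using this
    obtain ⟨g, u, hgb, hga⟩ := geometric_hahn_banach_closed_point hQ'v hQ'c hnot'
    set f : Y →L[ℝ] ℝ := g.comp eu.toContinuousLinearMap with hf
    have hfQ : sSup (f '' Q) ≤ u := by
      apply csSup_le (hQne.image f)
      rintro y ⟨b, hb, rfl⟩
      exact (hgb (eu b) ⟨b, hb, rfl⟩).le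
    have hfa : f a ≤ sSup (f '' P) :=
      le_csSup (hPc.image f.continuous).bddAbove ⟨a, ha, rfl⟩
    rw [hPQ f] at hfa
    have : f a = g (eu a) := rfl
    rw [this] at hfa
    linarith
  apply Set.Subset.antisymm
  · exact key A B hAc hBc hBv hBne h
  · exact key B A hBc hAc hAv hAne (fun f => (h f).symm)

/-- a lower semicontinuous, `ℚ₊`-homogeneous superadditive correspondence
with nonempty compact convex values in a finite-dimensional real TVS, defined on a
convex cone with finite cone-basis, is positively homogeneous. -/
theorem Qpos_homog_superadditive_is_pos_homog
    {X : Type*} [AddCommGroup X] [Module ℝ X] [TopologicalSpace X]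
    [IsTopologicalAddGroup X] [ContinuousSMul ℝ X]
    {Y : Type*} [AddCommGroup Y] [Module ℝ Y] [TopologicalSpace Y]
    [IsTopologicalAddGroup Y] [ContinuousSMul ℝ Y] [T2Space Y]
    [FiniteDimensional ℝ Y]
    {n : ℕ} (e : Fin n → X) (he : LinearIndependent ℝ e)
    (C : Set X)
    (hC : C = {x | ∃ lam : Fin n → ℝ, (∀ i, 0 ≤ lam i) ∧ x = ∑ i, lam i • e i})
    (φ : X → Set Y)
    (hne : ∀ x ∈ C, (φ x).Nonempty)
    (hcpt : ∀ x ∈ C, IsCompact (φ x))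
    (hconv : ∀ x ∈ C, Convex ℝ (φ x))
    (hsuper : ∀ x ∈ C, ∀ y ∈ C, φ x + φ y ⊆ φ (x + y))
    (hQhom : ∀ (r : ℚ), 0 < r → ∀ x ∈ C, φ ((r : ℝ) • x) = (r : ℝ) • φ x)
    (hlsc : ∀ x ∈ C, ∀ U : Set Y, IsOpen U → (φ x ∩ U).Nonempty →
      ∃ V : Set X, IsOpen V ∧ x ∈ V ∧ ∀ y ∈ V ∩ C, (φ y ∩ U).Nonempty) :
    ∀ (t : ℝ), 0 < t → ∀ x ∈ C, φ (t • x) = t • φ x := by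
  intro t ht x hx
  -- membership of scalings of x in C
  have hmem : ∀ s : ℝ, 0 ≤ s → s • x ∈ C := by
    intro s hs
    rw [hC] at hx ⊢
    obtain ⟨lam, hlam, hxeq⟩ := hx
    refine ⟨fun i => s * lam i, fun i => mul_nonneg hs (hlam i), ?_⟩
    rw [hxeq, Finset.smul_sum]
    simp [smul_smul]
  -- nonemptiness / compactness / bdd of images
  have hFne : ∀ s : ℝ, 0 ≤ s → (φ (s • x)).Nonempty := fun s hs => hne _ (hmem s hs)
  have hFcpt : ∀ s : ℝ, 0 ≤ s → IsCompact (φ (s • x)) := fun s hs => hcpt _ (hmem s hs)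
  have hbddA : ∀ (f : Y →L[ℝ] ℝ) (s : ℝ), 0 ≤ s → BddAbove (f '' φ (s • x)) :=
    fun f s hs => ((hFcpt s hs).image f.continuous).bddAbove
  have hbddB : ∀ (f : Y →L[ℝ] ℝ) (s : ℝ), 0 ≤ s → BddBelow (f '' φ (s • x)) :=
    fun f s hs => ((hFcpt s hs).image f.continuous).bddBelow
  -- supremum attained
  have hattain : ∀ (f : Y →L[ℝ] ℝ) (s : ℝ), 0 ≤ s →
      ∃ a ∈ φ (s • x), f a = sSup (f '' φ (s • x)) := by
    intro f s hs
    obtain ⟨a, haF, hmax⟩ := (hFcpt s hs).exists_isMaxOn (hFne s hs) f.continuous.continuousOn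
    refine ⟨a, haF, ?_⟩
    have hg : IsGreatest (f '' φ (s • x)) (f a) := by
      refine ⟨⟨a, haF, rfl⟩, ?_⟩
      rintro y ⟨b, hb, rfl⟩
      exact hmax hb
    exact hg.csSup_eq.symm
  -- rational homogeneity in terms of support suprema
  have hrat : ∀ (f : Y →L[ℝ] ℝ) (q : ℚ), 0 < q →
      sSup (f '' φ ((q : ℝ) • x)) = (q : ℝ) * sSup (f '' φ x) := by
    intro f q hq
    rw [hQhom q hq x hx]
    exact sSup_image_smul_set_aux f q (by exact_mod_cast hq) _ (hne x hx)
      ((hcpt x hx).image f.continuous).bddAbove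
  -- lower semicontinuity of the support supremum along the ray
  have hlsc' : ∀ (f : Y →L[ℝ] ℝ) (s : ℝ), 0 < s → ∀ ε : ℝ, 0 < ε →
      ∃ δ > 0, ∀ s' : ℝ, 0 < s' → |s' - s| < δ →
        sSup (f '' φ (s • x)) - ε < sSup (f '' φ (s' • x)) := by
    intro f s hs ε hε
    obtain ⟨a, haF, hfa⟩ := hattain f s hs.le
    set U := f ⁻¹' Set.Ioi (sSup (f '' φ (s • x)) - ε) with hU
    have hUopen : IsOpen U := isOpen_Ioi.preimage f.continuous
    have hUmeet : (φ (s • x) ∩ U).Nonempty := by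
      refine ⟨a, haF, ?_⟩
      simp only [hU, Set.mem_preimage, Set.mem_Ioi, hfa]
      linarith
    obtain ⟨V, hVopen, hVmem, hV⟩ := hlsc _ (hmem s hs.le) U hUopen hUmeet
    have hg : Continuous (fun s' : ℝ => s' • x) := continuous_id.smul continuous_const
    have hpre : IsOpen ((fun s' : ℝ => s' • x) ⁻¹' V) := hVopen.preimage hg
    obtain ⟨δ, hδ, hball⟩ := Metric.isOpen_iff.1 hpre s hVmem
    refine ⟨δ, hδ, ?_⟩
    intro s' hs' hdist
    have hs'V : s' • x ∈ V := hball (by simpa [Real.dist_eq] using hdist)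
    obtain ⟨y, hyφ, hyU⟩ := hV (s' • x) ⟨hs'V, hmem s' hs'.le⟩
    have hle : f y ≤ sSup (f '' φ (s' • x)) := le_csSup (hbddA f s' hs'.le) ⟨y, hyφ, rfl⟩
    have : sSup (f '' φ (s • x)) - ε < f y := hyU
    linarith
  -- upper bound: sSup (f '' φ (s•x)) ≤ s * sSup (f '' φ x)
  have hub : ∀ (f : Y →L[ℝ] ℝ) (s : ℝ), 0 < s →
      sSup (f '' φ (s • x)) ≤ s * sSup (f '' φ x) := by
    intro f s hs
    set c := sSup (f '' φ x) with hc
    refine le_of_forall_pos_le_add ?_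
    intro ε hε
    set ε₁ := ε / (|c| + 1) with hε₁def
    have hcpos : (0:ℝ) < |c| + 1 := by positivity
    have hε₁ : 0 < ε₁ := div_pos hε hcpos
    obtain ⟨δ, hδ, hd⟩ := hlsc' f s hs ε₁ hε₁
    have hlt : max (s - min δ ε₁) (s / 2) < s := by
      rcases lt_min hδ hε₁ with _
      apply max_lt <;> [skip; linarith]
      have : 0 < min δ ε₁ := lt_min hδ hε₁
      linarith
    obtain ⟨q, hq1, hq2⟩ := exists_rat_btwn hlt
    have hq0' : (0:ℝ) < q := lt_of_le_of_lt (by linarith : (0:ℝ) ≤ s / 2)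
      (lt_of_le_of_lt (le_max_right _ _) hq1)
    have hq0 : (0:ℚ) < q := by exact_mod_cast hq0'
    have hqlow : s - min δ ε₁ < (q:ℝ) := lt_of_le_of_lt (le_max_left _ _) hq1
    have habs : |(q:ℝ) - s| < min δ ε₁ := by
      rw [abs_sub_lt_iff]
      constructor <;> [linarith [lt_min hδ hε₁]; linarith]
    have hdq := hd q hq0' (lt_of_lt_of_le habs (min_le_left _ _))
    rw [hrat f q hq0] at hdq
    -- sSup (f '' φ (s•x)) - ε₁ < q * c
    have habs₁ : |(q:ℝ) - s| < ε₁ := lt_of_lt_of_le habs (min_le_right _ _)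
    have h2 : (q:ℝ) * c - s * c ≤ |(q:ℝ) - s| * |c| := by
      calc (q:ℝ) * c - s * c = ((q:ℝ) - s) * c := by ring
        _ ≤ |((q:ℝ) - s) * c| := le_abs_self _
        _ = |(q:ℝ) - s| * |c| := abs_mul _ _
    have h3 : |(q:ℝ) - s| * |c| ≤ ε₁ * |c| :=
      mul_le_mul_of_nonneg_right habs₁.le (abs_nonneg c)
    have h4 : ε₁ * (|c| + 1) = ε := div_mul_cancel₀ ε (ne_of_gt hcpos)
    nlinarith
  -- lower bound on infima: s * sInf (f '' φ x) ≤ sInf (f '' φ (s•x))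
  have himg_neg : ∀ (f : Y →L[ℝ] ℝ) (A : Set Y), ((-f) '' A) = -(f '' A) := by
    intro f A
    ext y
    simp only [Set.mem_image, Set.mem_neg, ContinuousLinearMap.neg_apply]
    constructor
    · rintro ⟨b, hb, rfl⟩; exact ⟨b, hb, by ring⟩
    · rintro ⟨b, hb, hby⟩; exact ⟨b, hb, by linarith⟩
  have hsup_neg : ∀ (f : Y →L[ℝ] ℝ) (A : Set Y), sSup ((-f) '' A) = -sInf (f '' A) := by
    intro f A
    rw [himg_neg, Real.sInf_def, neg_neg]
  have hlb_inf : ∀ (f : Y →L[ℝ] ℝ) (s : ℝ), 0 < s →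
      s * sInf (f '' φ x) ≤ sInf (f '' φ (s • x)) := by
    intro f s hs
    have h1 := hub (-f) s hs
    rw [hsup_neg, hsup_neg] at h1
    nlinarith
  -- lower bound: t * sSup (f '' φ x) ≤ sSup (f '' φ (t•x))
  have hlb : ∀ (f : Y →L[ℝ] ℝ),
      t * sSup (f '' φ x) ≤ sSup (f '' φ (t • x)) := by
    intro f
    set c := sSup (f '' φ x) with hc
    set m := sInf (f '' φ x) with hm
    rw [show t * c = sSup (f '' φ (t • x)) + (t * c - sSup (f '' φ (t • x))) by ring]
    refine le_of_forall_pos_le_add ?_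
    intro ε hε
    set ε₁ := ε / (|c| + |m| + 1) with hε₁def
    have hcpos : (0:ℝ) < |c| + |m| + 1 := by positivity
    have hε₁ : 0 < ε₁ := div_pos hε hcpos
    have hlt : max (t - ε₁) (t / 2) < t := by
      apply max_lt <;> linarith
    obtain ⟨q, hq1, hq2⟩ := exists_rat_btwn hlt
    have hq0' : (0:ℝ) < q := lt_of_le_of_lt (by linarith : (0:ℝ) ≤ t / 2)
      (lt_of_le_of_lt (le_max_right _ _) hq1)
    have hq0 : (0:ℚ) < q := by exact_mod_cast hq0'
    have hqlow : t - ε₁ < (q:ℝ) := lt_of_le_of_lt (le_max_left _ _) hq1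
    have htq : 0 < t - (q:ℝ) := by linarith
    -- pick maximizer a in φ(q•x) and any b in φ((t-q)•x)
    obtain ⟨a, haF, hfa⟩ := hattain f q hq0'.le
    obtain ⟨b, hbF⟩ := hFne (t - q) htq.le
    have hfb : sInf (f '' φ ((t - (q:ℝ)) • x)) ≤ f b :=
      csInf_le (hbddB f _ htq.le) ⟨b, hbF, rfl⟩
    have hfb2 : (t - (q:ℝ)) * m ≤ f b := le_trans (hlb_inf f _ htq) hfb
    -- superadditivity
    have hsum : a + b ∈ φ (t • x) := by
      have hmemsum := hsuper _ (hmem q hq0'.le) _ (hmem (t - q) htq.le)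
      have heq : (q:ℝ) • x + (t - (q:ℝ)) • x = t • x := by
        rw [← add_smul]; ring_nf
      rw [heq] at hmemsum
      exact hmemsum (Set.add_mem_add haF hbF)
    have hK : f a + f b ≤ sSup (f '' φ (t • x)) :=
      le_trans (le_of_eq (map_add f a b).symm) (le_csSup (hbddA f t ht.le) ⟨a + b, hsum, rfl⟩)
    rw [hfa, hrat f q hq0] at hK
    -- q*c + (t-q)*m ≤ sSup (f '' φ (t•x))
    have h2 : (t - (q:ℝ)) * c ≤ ε₁ * |c| := by
      calc (t - (q:ℝ)) * c ≤ (t - (q:ℝ)) * |c| :=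
            mul_le_mul_of_nonneg_left (le_abs_self c) htq.le
        _ ≤ ε₁ * |c| := mul_le_mul_of_nonneg_right (by linarith) (abs_nonneg c)
    have h3 : -((t - (q:ℝ)) * m) ≤ ε₁ * |m| := by
      calc -((t - (q:ℝ)) * m) = (t - (q:ℝ)) * (-m) := by ring
        _ ≤ (t - (q:ℝ)) * |m| :=
            mul_le_mul_of_nonneg_left (neg_le_abs m) htq.le
        _ ≤ ε₁ * |m| := mul_le_mul_of_nonneg_right (by linarith) (abs_nonneg m)
    have h4 : ε₁ * (|c| + |m| + 1) = ε := div_mul_cancel₀ ε (ne_of_gt hcpos)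
    nlinarith
  -- support functions agree
  have key : ∀ f : Y →L[ℝ] ℝ, sSup (f '' φ (t • x)) = t * sSup (f '' φ x) :=
    fun f => le_antisymm (hub f t ht) (hlb f)
  -- conclude set equality
  have hBsmul : t • φ x = (fun y => t • y) '' φ x := (Set.image_smul).symm
  refine eq_of_forall_sSup_image_eq (hFcpt t ht.le) (hconv _ (hmem t ht.le)) (hFne t ht.le)
    ?_ ((hconv x hx).smul t) ((hne x hx).smul_set) ?_
  · rw [hBsmul]
    exact (hcpt x hx).image (continuous_const_smul t)
  · intro f
    rw [key f,
      sSup_image_smul_set_aux f t ht _ (hne x hx) ((hcpt x hx).image f.continuous).bddAbove]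
end

section
/- Let C be a convex cone with finite cone-basis in a real topological vector space X, let L be the span of the basis, and let φ : C → cc(ℝ) (nonempty compact convex values in ℝ) be lower semicontinuous, ℚ₊-homogeneous, and superadditive. Then φ is continuous (both upper and lower semicontinuous) at every point of the interior of C relative to L. -/
open Pointwise

/-- Lemma 2: a lower semicontinuous, `ℚ₊`-homogeneous superadditive
correspondence with nonempty compact convex values in `ℝ`, on a convex cone with
finite cone-basis, is continuous (upper and lower semicontinuous) at every point of
the interior of `C` relative to `L = span E`. -/
theorem superadditive_continuous_on_relative_interior
    {X : Type*} [AddCommGroup X] [Module ℝ X] [TopologicalSpace X]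
    [IsTopologicalAddGroup X] [ContinuousSMul ℝ X]
    {n : ℕ} (e : Fin n → X) (he : LinearIndependent ℝ e)
    (C : Set X)
    (hC : C = {x | ∃ lam : Fin n → ℝ, (∀ i, 0 ≤ lam i) ∧ x = ∑ i, lam i • e i})
    (L : Submodule ℝ X) (hL : L = Submodule.span ℝ (Set.range e))
    (intL : Set X)
    (hintL : intL = {x | x ∈ C ∧ ∃ U : Set X, IsOpen U ∧ x ∈ U ∧
      U ∩ (L : Set X) ⊆ C})
    (φ : X → Set ℝ)
    (hne : ∀ x ∈ C, (φ x).Nonempty)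
    (hcpt : ∀ x ∈ C, IsCompact (φ x))
    (hconv : ∀ x ∈ C, Convex ℝ (φ x))
    (hsuper : ∀ x ∈ C, ∀ y ∈ C, φ x + φ y ⊆ φ (x + y))
    (hQhom : ∀ (r : ℚ), 0 < r → ∀ x ∈ C, φ ((r : ℝ) • x) = (r : ℝ) • φ x)
    (hlsc : ∀ x ∈ C, ∀ U : Set ℝ, IsOpen U → (φ x ∩ U).Nonempty →
      ∃ V : Set X, IsOpen V ∧ x ∈ V ∧ ∀ y ∈ V ∩ C, (φ y ∩ U).Nonempty) :
    ∀ x ∈ intL,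
      (∀ U : Set ℝ, IsOpen U → φ x ⊆ U →
        ∃ V : Set X, IsOpen V ∧ x ∈ V ∧ ∀ y ∈ V ∩ C, φ y ⊆ U) ∧
      (∀ U : Set ℝ, IsOpen U → (φ x ∩ U).Nonempty →
        ∃ V : Set X, IsOpen V ∧ x ∈ V ∧ ∀ y ∈ V ∩ C, (φ y ∩ U).Nonempty) := by
  intro x hx
  rw [hintL] at hx
  obtain ⟨hxC, U₀, hU₀open, hxU₀, hU₀sub⟩ := hx
  -- C ⊆ L
  have hCL : C ⊆ (L : Set X) := by
    intro z hz
    rw [hC] at hz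
    obtain ⟨lam, -, rfl⟩ := hz
    rw [hL]
    exact Submodule.sum_mem _ fun i _ =>
      Submodule.smul_mem _ _ (Submodule.subset_span ⟨i, rfl⟩)
  set f : X → ℝ := fun z => sInf (φ z) with hf
  set g : X → ℝ := fun z => sSup (φ z) with hg
  have hfmem : ∀ z ∈ C, f z ∈ φ z := fun z hz => (hcpt z hz).sInf_mem (hne z hz)
  have hgmem : ∀ z ∈ C, g z ∈ φ z := fun z hz => (hcpt z hz).sSup_mem (hne z hz)
  have hbdd : ∀ z ∈ C, ∀ t ∈ φ z, f z ≤ t ∧ t ≤ g z := by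
    intro z hz t ht
    exact ⟨csInf_le (hcpt z hz).bddBelow ht, le_csSup (hcpt z hz).bddAbove ht⟩
  -- φ x = Icc (f x) (g x)
  have hφx : φ x = Set.Icc (f x) (g x) := by
    apply Set.Subset.antisymm
    · intro t ht
      exact ⟨(hbdd x hxC t ht).1, (hbdd x hxC t ht).2⟩
    · exact ((hconv x hxC).ordConnected).out (hfmem x hxC) (hgmem x hxC)
  have hfg : f x ≤ g x := (hbdd x hxC _ (hgmem x hxC)).1
  -- homogeneity at 2
  have h2x : ((2 : ℝ) • x) = x + x := two_smul ℝ x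
  have hφ2x : φ ((2 : ℝ) • x) = (2 : ℝ) • φ x := by
    have := hQhom 2 (by norm_num) x hxC
    simpa using this
  have hsInf2 : sInf (φ ((2 : ℝ) • x)) = 2 * f x := by
    rw [hφ2x, Real.sInf_smul_of_nonneg (by norm_num : (0:ℝ) ≤ 2)]
    rfl
  have hsSup2 : sSup (φ ((2 : ℝ) • x)) = 2 * g x := by
    rw [hφ2x, Real.sSup_smul_of_nonneg (by norm_num : (0:ℝ) ≤ 2)]
    rfl
  have h2xC : ((2 : ℝ) • x) ∈ C := by
    rw [hC] at hxC ⊢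
    obtain ⟨lam, hlam, rfl⟩ := hxC
    exact ⟨fun i => 2 * lam i, fun i => mul_nonneg (by norm_num) (hlam i), by
      rw [Finset.smul_sum]; congr 1; ext i; rw [smul_smul]⟩
  have hcpt2 := hcpt _ h2xC
  constructor
  · -- upper semicontinuity
    intro U hUopen hφxU
    have hKcpt : IsCompact (Set.Icc (f x) (g x)) := isCompact_Icc
    obtain ⟨ε, hεpos, hεsub⟩ := hKcpt.exists_cthickening_subset_open hUopen
      (hφx ▸ hφxU)
    -- Icc (f x - ε) (g x + ε) ⊆ U
    have hIccU : Set.Icc (f x - ε) (g x + ε) ⊆ U := by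
      intro t ht
      apply hεsub
      rcases le_total t (f x) with h | h
      · exact Metric.mem_cthickening_of_dist_le t (f x) ε _
          ⟨le_refl _, hfg⟩
          (by rw [Real.dist_eq, abs_le]; constructor <;> [linarith [ht.1]; linarith])
      · rcases le_total t (g x) with h' | h'
        · exact Metric.self_subset_cthickening _ ⟨h, h'⟩
        · exact Metric.mem_cthickening_of_dist_le t (g x) ε _
            ⟨hfg, le_refl _⟩
            (by rw [Real.dist_eq, abs_le]; constructor <;> [linarith; linarith [ht.2]])
    -- lsc-derived neighborhoods
    obtain ⟨Vf, hVfopen, hxVf, hVf⟩ := hlsc x hxC (Set.Iio (f x + ε)) isOpen_Iio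
      ⟨f x, hfmem x hxC, by simp; linarith⟩
    obtain ⟨Vg, hVgopen, hxVg, hVg⟩ := hlsc x hxC (Set.Ioi (g x - ε)) isOpen_Ioi
      ⟨g x, hgmem x hxC, by simp; linarith⟩
    -- reflection map
    set m : X → X := fun y => (2 : ℝ) • x - y with hm
    have hmcont : Continuous m := continuous_const.sub continuous_id
    refine ⟨m ⁻¹' (U₀ ∩ Vf ∩ Vg), ((hU₀open.inter hVfopen).inter hVgopen).preimage hmcont,
      ?_, ?_⟩
    · have hmx : m x = x := by rw [hm]; simp [h2x]
      rw [Set.mem_preimage, hmx]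
      exact ⟨⟨hxU₀, hxVf⟩, hxVg⟩
    · rintro y ⟨hyV, hyC⟩
      set z := m y with hz
      have hzL : z ∈ (L : Set X) := by
        exact Submodule.sub_mem _ (Submodule.smul_mem _ _ (hCL hxC)) (hCL hyC)
      have hzC : z ∈ C := hU₀sub ⟨hyV.1.1, hzL⟩
      have hyz : y + z = (2 : ℝ) • x := by rw [hz, hm]; rw [add_comm]; exact sub_add_cancel _ _
      -- bounds on f z, g z
      obtain ⟨tf, htfφ, htf⟩ := hVf z ⟨hyV.1.2, hzC⟩
      obtain ⟨tg, htgφ, htg⟩ := hVg z ⟨hyV.2, hzC⟩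
      have hfz : f z < f x + ε := lt_of_le_of_lt (hbdd z hzC tf htfφ).1 htf
      have hgz : g x - ε < g z := lt_of_lt_of_le htg (hbdd z hzC tg htgφ).2
      -- superadditivity
      have hsub2 : φ y + φ z ⊆ φ ((2 : ℝ) • x) := hyz ▸ hsuper y hyC z hzC
      have hfy : f x - ε < f y := by
        have hmem : f y + f z ∈ φ ((2 : ℝ) • x) :=
          hsub2 (Set.add_mem_add (hfmem y hyC) (hfmem z hzC))
        have := csInf_le hcpt2.bddBelow hmem
        rw [hsInf2] at this
        linarith
      have hgy : g y < g x + ε := by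
        have hmem : g y + g z ∈ φ ((2 : ℝ) • x) :=
          hsub2 (Set.add_mem_add (hgmem y hyC) (hgmem z hzC))
        have := le_csSup hcpt2.bddAbove hmem
        rw [hsSup2] at this
        linarith
      intro t ht
      exact hIccU ⟨by linarith [(hbdd y hyC t ht).1], by linarith [(hbdd y hyC t ht).2]⟩
  · exact hlsc x hxC
end

section
/- Let g : C → ℝ be a Jensen-convex function on a convex cone C with finite cone-basis in a real topological vector space, and suppose g is bounded above on a neighborhood (relative to L = span of the basis) of some point x₀ ∈ int_L C. Then g is continuous on int_L C. -/
open Pointwise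

set_option maxHeartbeats 1000000 in
/-- a Jensen-convex function on a convex cone with finite cone-basis that
is bounded above on a relative neighborhood of a point of `int_L C` is continuous
(within `C`) at every point of `int_L C`. -/
theorem jensen_convex_bounded_above_continuous
    {X : Type*} [AddCommGroup X] [Module ℝ X] [TopologicalSpace X]
    [IsTopologicalAddGroup X] [ContinuousSMul ℝ X]
    {n : ℕ} (e : Fin n → X) (he : LinearIndependent ℝ e)
    (C : Set X)
    (hC : C = {x | ∃ lam : Fin n → ℝ, (∀ i, 0 ≤ lam i) ∧ x = ∑ i, lam i • e i})
    (L : Submodule ℝ X) (hL : L = Submodule.span ℝ (Set.range e))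
    (intL : Set X)
    (hintL : intL = {x | x ∈ C ∧ ∃ U : Set X, IsOpen U ∧ x ∈ U ∧
      U ∩ (L : Set X) ⊆ C})
    (g : X → ℝ)
    (hjensen : ∀ x ∈ C, ∀ y ∈ C, g ((1 / 2 : ℝ) • (x + y)) ≤ (g x + g y) / 2)
    (x₀ : X) (hx₀ : x₀ ∈ intL)
    (hbdd : ∃ (U : Set X) (M : ℝ), IsOpen U ∧ x₀ ∈ U ∧
      ∀ y ∈ U ∩ (L : Set X) ∩ C, g y ≤ M) :
    ∀ x ∈ intL, ContinuousWithinAt g C x := by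
  -- C is contained in L
  have hCL : C ⊆ (L : Set X) := by
    intro x hx
    rw [hC] at hx
    obtain ⟨lam, -, rfl⟩ := hx
    rw [hL]
    exact Submodule.sum_mem _ fun i _ => Submodule.smul_mem _ _
      (Submodule.subset_span ⟨i, rfl⟩)
  -- C is closed under nonnegative combinations
  have hCconv : ∀ a b : ℝ, 0 ≤ a → 0 ≤ b → ∀ x ∈ C, ∀ y ∈ C, a • x + b • y ∈ C := by
    intro a b ha hb x hx y hy
    rw [hC] at hx hy ⊢
    obtain ⟨lx, hlx, rfl⟩ := hx
    obtain ⟨ly, hly, rfl⟩ := hy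
    refine ⟨fun i => a * lx i + b * ly i, fun i => add_nonneg (mul_nonneg ha (hlx i)) (mul_nonneg hb (hly i)), ?_⟩
    rw [Finset.smul_sum, Finset.smul_sum, ← Finset.sum_add_distrib]
    exact Finset.sum_congr rfl fun i _ => by
      rw [add_smul, smul_smul, smul_smul]
  -- dyadic convexity
  have hdyadic : ∀ k : ℕ, ∀ x ∈ C, ∀ y ∈ C,
      g ((1 - (1/2:ℝ)^k) • x + ((1/2:ℝ)^k) • y)
        ≤ (1 - (1/2:ℝ)^k) * g x + ((1/2:ℝ)^k) * g y := by
    intro k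
    induction k with
    | zero => intro x hx y hy; simp
    | succ k ih =>
      intro x hx y hy
      have ht0 : (0:ℝ) ≤ (1/2:ℝ)^k := by positivity
      have ht1 : ((1/2:ℝ))^k ≤ 1 := pow_le_one₀ (by norm_num) (by norm_num)
      have hp : (1 - (1/2:ℝ)^k) • x + ((1/2:ℝ)^k) • y ∈ C :=
        hCconv _ _ (by linarith) ht0 x hx y hy
      have hkey : (1 - (1/2:ℝ)^(k+1)) • x + ((1/2:ℝ)^(k+1)) • y
          = (1/2:ℝ) • (x + ((1 - (1/2:ℝ)^k) • x + ((1/2:ℝ)^k) • y)) := by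
        rw [pow_succ]
        module
      rw [hkey]
      have h1 := hjensen x hx _ hp
      have h2 := ih x hx y hy
      have h3 : (g x + ((1 - (1/2:ℝ)^k) * g x + ((1/2:ℝ)^k) * g y)) / 2
          = (1 - (1/2:ℝ)^(k+1)) * g x + ((1/2:ℝ)^(k+1)) * g y := by
        rw [pow_succ]; ring
      linarith
  -- main argument
  intro x hx
  rw [hintL] at hx hx₀
  obtain ⟨hxC, Ux, hUxo, hxUx, hUxL⟩ := hx
  obtain ⟨hx₀C, U₀', hU₀'o, hx₀U₀', hU₀'L⟩ := hx₀
  obtain ⟨Ub, M, hUbo, hx₀Ub, hM⟩ := hbdd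
  have hxL : x ∈ L := hCL hxC
  have hx₀L : x₀ ∈ L := hCL hx₀C
  set U₀ : Set X := U₀' ∩ Ub with hU₀
  have hU₀o : IsOpen U₀ := hU₀'o.inter hUbo
  have hx₀U₀ : x₀ ∈ U₀ := ⟨hx₀U₀', hx₀Ub⟩
  have hU₀C : ∀ y ∈ U₀, y ∈ (L:Set X) → y ∈ C := fun y hy hyL => hU₀'L ⟨hy.1, hyL⟩
  have hU₀M : ∀ y ∈ U₀, y ∈ (L:Set X) → g y ≤ M := fun y hy hyL =>
    hM y ⟨⟨hy.2, hyL⟩, hU₀C y hy hyL⟩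
  -- Step 1: find k₁ ≥ 1 with z := x + (t/(1-t)) • (x - x₀) ∈ Ux, t = (1/2)^k₁
  have h1 : Filter.Tendsto (fun k:ℕ => ((1/2:ℝ)^k)) Filter.atTop (nhds 0) :=
    tendsto_pow_atTop_nhds_zero_of_lt_one (by norm_num) (by norm_num)
  have htend : Filter.Tendsto (fun k:ℕ => ((1/2:ℝ)^k / (1 - (1/2:ℝ)^k)))
      Filter.atTop (nhds 0) := by
    have := h1.div (Filter.Tendsto.const_sub 1 h1) (by norm_num)
    simpa [Pi.div_def] using this
  have hc : Continuous (fun s : ℝ => x + s • (x - x₀)) :=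
    continuous_const.add (continuous_id.smul continuous_const)
  have htend2 : Filter.Tendsto
      (fun k : ℕ => x + ((1/2:ℝ)^k / (1 - (1/2:ℝ)^k)) • (x - x₀))
      Filter.atTop (nhds x) := by
    have := (hc.tendsto 0).comp htend
    simpa [Function.comp_def] using this
  have hev : ∀ᶠ k in Filter.atTop,
      x + ((1/2:ℝ)^k / (1 - (1/2:ℝ)^k)) • (x - x₀) ∈ Ux :=
    htend2 (hUxo.mem_nhds hxUx)
  obtain ⟨k₁, hk₁mem, hk₁ge⟩ := (hev.and (Filter.eventually_ge_atTop 1)).exists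
  set t : ℝ := (1/2:ℝ)^k₁ with htdef
  have ht0 : 0 < t := by positivity
  have ht1 : t < 1 := pow_lt_one₀ (by norm_num) (by norm_num) (by omega)
  set z : X := x + (t / (1 - t)) • (x - x₀) with hzdef
  have hzUx : z ∈ Ux := hk₁mem
  have hzL : z ∈ L := L.add_mem hxL (L.smul_mem _ (L.sub_mem hxL hx₀L))
  have hzC : z ∈ C := hUxL ⟨hzUx, hzL⟩
  -- key algebra: (1-t) • z + t • u = x + t • (u - x₀)
  have hkeyalg : ∀ u : X, (1 - t) • z + t • u = x + t • (u - x₀) := by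
    intro u
    rw [hzdef]
    have h1t : (1 - t) ≠ 0 := by linarith
    have hc' : (1 - t) * (t / (1 - t)) = t := by field_simp
    calc (1 - t) • (x + (t / (1 - t)) • (x - x₀)) + t • u
        = (1 - t) • x + ((1 - t) * (t / (1 - t))) • (x - x₀) + t • u := by
          rw [smul_add, smul_smul]
      _ = x + t • (u - x₀) := by rw [hc']; module
  -- the set V where g is bounded by M'
  set V : Set X := (fun y => x₀ + t⁻¹ • (y - x)) ⁻¹' U₀ with hVdef
  have hVo : IsOpen V := hU₀o.preimage
    (continuous_const.add ((continuous_id.sub continuous_const).const_smul _))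
  have hxV : x ∈ V := by
    simp only [hVdef, Set.mem_preimage, sub_self, smul_zero, add_zero]
    exact hx₀U₀
  set M' : ℝ := (1 - t) * g z + t * M with hM'def
  have hVbound : ∀ y ∈ V, y ∈ (L:Set X) → y ∈ C ∧ g y ≤ M' := by
    intro y hyV hyL
    set u : X := x₀ + t⁻¹ • (y - x) with hudef
    have huU₀ : u ∈ U₀ := hyV
    have huL : u ∈ L := L.add_mem hx₀L (L.smul_mem _ (L.sub_mem hyL hxL))
    have huC : u ∈ C := hU₀C u huU₀ huL
    have huM : g u ≤ M := hU₀M u huU₀ huL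
    have hy : y = (1 - t) • z + t • u := by
      rw [hkeyalg u, hudef]
      have : t • (x₀ + t⁻¹ • (y - x) - x₀) = y - x := by
        rw [add_sub_cancel_left, smul_smul, mul_inv_cancel₀ (ne_of_gt ht0), one_smul]
      rw [this, add_sub_cancel]
    constructor
    · rw [hy]; exact hCconv _ _ (by linarith) (le_of_lt ht0) z hzC u huC
    · have := hdyadic k₁ z hzC u huC
      rw [← htdef] at this
      rw [hy, hM'def]
      calc g ((1 - t) • z + t • u) ≤ (1 - t) * g z + t * g u := this
        _ ≤ (1 - t) * g z + t * M := by nlinarith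
  have hgxM' : g x ≤ M' := (hVbound x hxV hxL).2
  -- Step 2: continuity within C at x
  show Filter.Tendsto g (nhdsWithin x C) (nhds (g x))
  rw [Metric.tendsto_nhds]
  intro ε hε
  set D : ℝ := M' - g x with hDdef
  have hD0 : 0 ≤ D := by rw [hDdef]; linarith
  obtain ⟨k, hk⟩ : ∃ k : ℕ, (1/2:ℝ)^k < min (1/2) (ε / (2 * (D + 1))) := by
    refine exists_pow_lt_of_lt_one ?_ (by norm_num)
    apply lt_min (by norm_num)
    positivity
  set s : ℝ := (1/2:ℝ)^k with hsdef
  have hs0 : 0 < s := by positivity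
  have hs12 : s < 1/2 := lt_of_lt_of_le hk (min_le_left _ _)
  have hsε : s < ε / (2 * (D + 1)) := lt_of_lt_of_le hk (min_le_right _ _)
  have hs1 : s < 1 := by linarith
  have hsD : 2 * s * D < ε := by
    have h2 : s * (2 * (D + 1)) < ε := by
      rw [lt_div_iff₀ (by positivity)] at hsε
      linarith
    nlinarith
  -- the neighborhood of x
  set W : Set X := ((fun y => x + s⁻¹ • (y - x)) ⁻¹' V) ∩
      ((fun y => x + ((1 - s)/s) • (x - y)) ⁻¹' V) with hWdef
  have hWo : IsOpen W :=
    (hVo.preimage (continuous_const.add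
        ((continuous_id.sub continuous_const).const_smul _))).inter
      (hVo.preimage (continuous_const.add
        ((continuous_const.sub continuous_id).const_smul _)))
  have hxW : x ∈ W := by
    constructor <;>
      simp only [Set.mem_preimage, sub_self, smul_zero, add_zero] <;> exact hxV
  filter_upwards [mem_nhdsWithin_of_mem_nhds (hWo.mem_nhds hxW),
    self_mem_nhdsWithin] with y hyW hyC
  have hyL : y ∈ L := hCL hyC
  obtain ⟨hyW1, hyW2⟩ := hyW
  -- upper estimate
  set z' : X := x + s⁻¹ • (y - x) with hz'def
  have hz'L : z' ∈ L := L.add_mem hxL (L.smul_mem _ (L.sub_mem hyL hxL))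
  obtain ⟨hz'C, hz'M⟩ := hVbound z' hyW1 hz'L
  have hy1 : y = (1 - s) • x + s • z' := by
    rw [hz'def]
    have : s • (x + s⁻¹ • (y - x)) = s • x + (y - x) := by
      rw [smul_add, smul_smul, mul_inv_cancel₀ (ne_of_gt hs0), one_smul]
    rw [smul_add, smul_smul, mul_inv_cancel₀ (ne_of_gt hs0), one_smul]
    module
  have hupper : g y ≤ g x + s * D := by
    have := hdyadic k x hxC z' hz'C
    rw [← hsdef, ← hy1] at this
    have e5 : s * g z' ≤ s * M' := mul_le_mul_of_nonneg_left hz'M (le_of_lt hs0)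
    have e6 : s * D = s * M' - s * g x := by rw [hDdef]; ring
    have e7 : (1 - s) * g x = g x - s * g x := by ring
    linarith
  -- lower estimate
  set w : X := x + ((1 - s)/s) • (x - y) with hwdef
  have hwL : w ∈ L := L.add_mem hxL (L.smul_mem _ (L.sub_mem hxL hyL))
  obtain ⟨hwC, hwM⟩ := hVbound w hyW2 hwL
  have hx1 : x = (1 - s) • y + s • w := by
    rw [hwdef]
    have : s * ((1 - s)/s) = 1 - s := by field_simp
    rw [smul_add, smul_smul, this]
    module
  have hlower : g x - g y ≤ 2 * s * D := by
    have := hdyadic k y hyC w hwC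
    rw [← hsdef, ← hx1] at this
    -- g x ≤ (1-s) g y + s g w ≤ (1-s) g y + s M'
    have h4 : g x ≤ (1 - s) * g y + s * M' := by
      have e5 : s * g w ≤ s * M' := mul_le_mul_of_nonneg_left hwM (le_of_lt hs0)
      linarith
    have h5 : (1 - s) * (g x - g y) ≤ s * D := by
      have e1 : (1 - s) * (g x - g y) = (g x - (1 - s) * g y) - s * g x := by ring
      have e2 : s * D = s * M' - s * g x := by rw [hDdef]; ring
      linarith
    have e8 : 2 * s * D = 2 * (s * D) := by ring
    rcases le_or_gt (g x - g y) 0 with h | h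
    · have := mul_nonneg (le_of_lt hs0) hD0
      linarith
    · have h6 : 0 < (g x - g y) * (1 - 2*s) :=
        mul_pos h (by linarith)
      have e4 : 2 * ((1 - s) * (g x - g y)) = (g x - g y) + (g x - g y) * (1 - 2*s) := by
        ring
      linarith
  rw [Real.dist_eq, abs_sub_lt_iff]
  constructor
  · have e9 : 2 * s * D = 2 * (s * D) := by ring
    have := mul_nonneg (le_of_lt hs0) hD0
    linarith
  · linarith
end

section
/- Let C be a convex cone in a real topological vector space and x₀ ∈ C. If a : C → ℝ is additive (a(x+y) = a(x)+a(y)) and bounded on a neighborhood of some interior point of C relative to span(C), and C has a finite cone-basis, then a is positively homogeneous on the relative interior of C: a(tx) = t·a(x) for all t > 0 and x ∈ int_L C. -/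
open Pointwise

/-- an additive function on a convex cone with finite cone-basis that is
bounded on a relative neighborhood of an interior point of `C` (relative to the span
`L` of the basis) is positively homogeneous on `int_L C`. -/
theorem additive_bounded_pos_homogeneous
    {X : Type*} [AddCommGroup X] [Module ℝ X] [TopologicalSpace X]
    [IsTopologicalAddGroup X] [ContinuousSMul ℝ X]
    {n : ℕ} (e : Fin n → X) (he : LinearIndependent ℝ e)
    (C : Set X)
    (hC : C = {x | ∃ lam : Fin n → ℝ, (∀ i, 0 ≤ lam i) ∧ x = ∑ i, lam i • e i})
    (L : Submodule ℝ X) (hL : L = Submodule.span ℝ (Set.range e))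
    (intL : Set X)
    (hintL : intL = {x | x ∈ C ∧ ∃ U : Set X, IsOpen U ∧ x ∈ U ∧
      U ∩ (L : Set X) ⊆ C})
    (a : X → ℝ)
    (hadd : ∀ x ∈ C, ∀ y ∈ C, a (x + y) = a x + a y)
    (hbdd : ∃ x₁ ∈ intL, ∃ (U : Set X) (M : ℝ), IsOpen U ∧ x₁ ∈ U ∧
      ∀ y ∈ U ∩ (L : Set X) ∩ C, |a y| ≤ M) :
    ∀ (t : ℝ), 0 < t → ∀ x ∈ intL, a (t • x) = t * a x := by
  -- basic closure properties of C
  have hCadd : ∀ x ∈ C, ∀ y ∈ C, x + y ∈ C := by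
    intro x hx y hy
    rw [hC] at hx hy ⊢
    obtain ⟨lam, hlam, rfl⟩ := hx
    obtain ⟨mu, hmu, rfl⟩ := hy
    exact ⟨fun i => lam i + mu i, fun i => add_nonneg (hlam i) (hmu i), by
      simp [add_smul, Finset.sum_add_distrib]⟩
  have hCsmul : ∀ c : ℝ, 0 ≤ c → ∀ x ∈ C, c • x ∈ C := by
    intro c hc x hx
    rw [hC] at hx ⊢
    obtain ⟨lam, hlam, rfl⟩ := hx
    exact ⟨fun i => c * lam i, fun i => mul_nonneg hc (hlam i), by
      simp [Finset.smul_sum, smul_smul]⟩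
  have hCL : C ⊆ (L : Set X) := by
    intro x hx
    rw [hC] at hx
    obtain ⟨lam, hlam, rfl⟩ := hx
    rw [hL]
    exact Submodule.sum_mem _ fun i _ =>
      Submodule.smul_mem _ _ (Submodule.subset_span ⟨i, rfl⟩)
  have hintC : intL ⊆ C := by
    intro x hx; rw [hintL] at hx; exact hx.1
  have h0 : (0 : X) ∈ C := by
    rw [hC]; exact ⟨fun _ => 0, fun _ => le_refl 0, by simp⟩
  have ha0 : a 0 = 0 := by
    have := hadd 0 h0 0 h0
    simp at this; linarith
  -- natural homogeneity
  have hnat : ∀ m : ℕ, ∀ x ∈ C, a ((m : ℝ) • x) = m * a x := by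
    intro m
    induction m with
    | zero => intro x hx; simp [ha0]
    | succ k ih =>
      intro x hx
      have h1 : ((k + 1 : ℕ) : ℝ) • x = (k : ℝ) • x + x := by
        push_cast; rw [add_smul, one_smul]
      rw [h1, hadd _ (hCsmul _ (by positivity) x hx) x hx, ih x hx]
      push_cast; ring
  -- rational homogeneity
  have hq : ∀ q : ℚ, 0 < q → ∀ x ∈ C, a ((q : ℝ) • x) = (q : ℝ) * a x := by
    intro q hq x hx
    have hd : (0 : ℝ) < (q.den : ℝ) := by exact_mod_cast q.pos
    have hqx : (q : ℝ) • x ∈ C := hCsmul _ (by positivity) x hx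
    have h1 : (q.den : ℝ) • ((q : ℝ) • x) = ((q.num.toNat : ℝ)) • x := by
      rw [smul_smul]
      congr 1
      have hnum : ((q.num.toNat : ℕ) : ℝ) = (q.num : ℝ) := by
        exact_mod_cast congrArg Int.cast (Int.toNat_of_nonneg (le_of_lt (Rat.num_pos.mpr hq)))
      rw [hnum, mul_comm]
      exact_mod_cast Rat.mul_den_eq_num q
    have h3 := hnat q.den _ hqx
    rw [h1, hnat _ x hx] at h3
    have h4 : (q.num.toNat : ℝ) = (q : ℝ) * q.den := by
      have hnum : ((q.num.toNat : ℕ) : ℝ) = (q.num : ℝ) := by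
        exact_mod_cast congrArg Int.cast (Int.toNat_of_nonneg (le_of_lt (Rat.num_pos.mpr hq)))
      rw [hnum]
      exact_mod_cast (Rat.mul_den_eq_num q).symm
    rw [h4] at h3
    have := mul_left_cancel₀ (ne_of_gt hd) (by linarith [h3] : (q.den:ℝ) * a ((q:ℝ)•x) = (q.den:ℝ) * ((q:ℝ) * a x))
    exact this
  -- main argument
  obtain ⟨x₁, hx₁, U, M, hUopen, hx₁U, hM⟩ := hbdd
  have hx₁C : x₁ ∈ C := hintC hx₁
  have hx₁L : x₁ ∈ (L : Set X) := hCL hx₁C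
  intro t ht x hxint
  have hxC : x ∈ C := hintC hxint
  have hxL : x ∈ (L : Set X) := hCL hxC
  set K : ℝ := M + |a x₁| with hK
  have hKnn : 0 ≤ K := by
    have := hM x₁ ⟨⟨hx₁U, hx₁L⟩, hx₁C⟩
    have := abs_nonneg (a x₁)
    dsimp [K]; linarith [abs_nonneg (a x₁), hM x₁ ⟨⟨hx₁U, hx₁L⟩, hx₁C⟩]
  -- bounded on small multiples
  have hb : ∃ δ : ℝ, 0 < δ ∧ ∀ s : ℝ, 0 < s → s < δ → |a (s • x)| ≤ K := by
    have hcont : Continuous fun s : ℝ => x₁ + s • x := continuous_const.add (continuous_id.smul continuous_const)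
    have hU0 : (fun s : ℝ => x₁ + s • x) ⁻¹' U ∈ nhds (0 : ℝ) := by
      apply (hUopen.preimage hcont).mem_nhds
      simp [hx₁U]
    obtain ⟨δ, hδpos, hδ⟩ := Metric.mem_nhds_iff.mp hU0
    refine ⟨δ, hδpos, fun s hs hsδ => ?_⟩
    have hsU : x₁ + s • x ∈ U := by
      apply hδ
      simp [Metric.mem_ball, Real.dist_eq, abs_of_pos hs, hsδ]
    have hsxC : s • x ∈ C := hCsmul s hs.le x hxC
    have hsC : x₁ + s • x ∈ C := hCadd x₁ hx₁C _ hsxC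
    have hsL : x₁ + s • x ∈ (L : Set X) := L.add_mem hx₁L (hCL hsxC)
    have hval := hM _ ⟨⟨hsU, hsL⟩, hsC⟩
    rw [hadd x₁ hx₁C _ hsxC] at hval
    have hone : |a (s • x)| ≤ |a x₁ + a (s • x)| + |a x₁| := by
      have h := abs_sub (a x₁ + a (s • x)) (a x₁)
      simpa using h
    dsimp [K]
    linarith
  obtain ⟨δ, hδpos, hδ⟩ := hb
  -- a(s•x) → 0
  have hsmall : ∀ ε : ℝ, 0 < ε → ∃ δ' : ℝ, 0 < δ' ∧ ∀ s : ℝ, 0 < s → s < δ' → |a (s • x)| ≤ ε := by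
    intro ε hε
    obtain ⟨m, hm⟩ := exists_nat_gt (K / ε)
    have hmpos : 0 < (m : ℝ) := lt_of_le_of_lt (div_nonneg hKnn hε.le) hm
    refine ⟨δ / m, div_pos hδpos hmpos, fun s hs hsδ => ?_⟩
    have hms : (m : ℝ) * s < δ := by
      have := (lt_div_iff₀ hmpos).mp hsδ
      linarith [mul_comm (m : ℝ) s]
    have h1 : a ((m : ℝ) • (s • x)) = m * a (s • x) := hnat m _ (hCsmul s hs.le x hxC)
    rw [smul_smul] at h1
    have h2 := hδ ((m : ℝ) * s) (by positivity) hms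
    rw [h1] at h2
    rw [abs_mul, abs_of_pos hmpos] at h2
    have : |a (s • x)| ≤ K / m := (le_div_iff₀' hmpos).mpr h2
    calc |a (s • x)| ≤ K / m := this
      _ ≤ ε := by rw [div_le_iff₀ hmpos]; nlinarith [(div_lt_iff₀ hε).mp hm]
  -- squeeze
  have key : ∀ ε : ℝ, 0 < ε → |a (t • x) - t * a x| ≤ ε := by
    intro ε hε
    obtain ⟨δ', hδ'pos, hδ'⟩ := hsmall (ε / 2) (by linarith)
    set c : ℝ := min δ' (ε / (2 * (|a x| + 1))) with hc
    have hcpos : 0 < c := lt_min hδ'pos (by positivity)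
    obtain ⟨q, hq1, hq2⟩ := exists_rat_btwn (show max 0 (t - c) < t by
      apply max_lt ht; linarith)
    have hqpos : (0 : ℚ) < q := by
      have : (0 : ℝ) < (q : ℝ) := lt_of_le_of_lt (le_max_left 0 (t - c)) hq1
      exact_mod_cast this
    have htq : 0 < t - (q : ℝ) := by linarith
    have htqc : t - (q : ℝ) < c := by
      have := lt_of_le_of_lt (le_max_right 0 (t - c)) hq1
      linarith
    have hsplit : t • x = (q : ℝ) • x + (t - (q : ℝ)) • x := by
      rw [← add_smul]; ring_nf
    have haq : a ((q : ℝ) • x) = (q : ℝ) * a x := hq _ hqpos x hxC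
    have := hadd _ (hCsmul _ (show (0:ℝ) ≤ (q:ℝ) by exact_mod_cast hqpos.le) x hxC) _
      (hCsmul _ htq.le x hxC)
    rw [← hsplit] at this
    rw [this, haq]
    have hsm := hδ' (t - (q : ℝ)) htq (lt_of_lt_of_le htqc (min_le_left _ _))
    have htqc2 : t - (q : ℝ) < ε / (2 * (|a x| + 1)) := lt_of_lt_of_le htqc (min_le_right _ _)
    have h2 : (t - (q : ℝ)) * |a x| ≤ ε / 2 := by
      have h3 : (t - (q : ℝ)) * (|a x| + 1) ≤ ε / 2 := by
        have hpos : (0:ℝ) < 2 * (|a x| + 1) := by positivity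
        have := (lt_div_iff₀ hpos).mp htqc2
        nlinarith [abs_nonneg (a x)]
      nlinarith [abs_nonneg (a x), htq]
    have h4 : |(q : ℝ) * a x + a ((t - (q : ℝ)) • x) - t * a x| ≤ ε := by
      have h5 : (q : ℝ) * a x + a ((t - (q : ℝ)) • x) - t * a x
          = a ((t - (q : ℝ)) • x) - (t - (q : ℝ)) * a x := by ring
      rw [h5]
      calc |a ((t - (q : ℝ)) • x) - (t - (q : ℝ)) * a x|
          ≤ |a ((t - (q : ℝ)) • x)| + |(t - (q : ℝ)) * a x| :=
            abs_sub (a ((t - (q : ℝ)) • x)) ((t - (q : ℝ)) * a x)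
        _ ≤ ε / 2 + (t - (q : ℝ)) * |a x| := by
            rw [abs_mul, abs_of_pos htq]; linarith
        _ ≤ ε := by linarith
    exact h4
  by_contra hne
  have hd : 0 < |a (t • x) - t * a x| := abs_pos.mpr (sub_ne_zero.mpr hne)
  have := key (|a (t • x) - t * a x| / 2) (by linarith)
  linarith
end

section
/- Let C be a convex cone in a real topological vector space Y, φ : C ⇉ Y a ℚ₊-homogeneous superadditive correspondence with nonempty values, and suppose φ(x₀+V∩(K−x₀)) is controlled in the sense that φ(z) ⊆ nŪ and φ(x₀) ⊆ nŪ for some n ∈ ℕ, closed balanced set Ū, where γz = x + (γ−1)x₀ for rational γ > 1. Then φ(x) ⊆ γnŪ + (γ−1)nŪ; in particular if Ū + Ū ⊆ W then φ(x) ⊆ γnW. -/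
open Pointwise

/-- the key inclusion in the proof of Lemma 1: if `φ` is a
`ℚ₊`-homogeneous superadditive correspondence, `γ > 1` is rational,
`γ • z = x + (γ - 1) • x₀` with `x, z, x₀ ∈ C` and `φ z ⊆ n • Ū`, `φ x₀ ⊆ n • Ū`
for a closed balanced neighborhood `Ū` of `0`, then
`φ x ⊆ (γ n) • Ū + ((γ - 1) n) • Ū`; if moreover `Ū + Ū ⊆ W`, then `φ x ⊆ (γ n) • W`. -/
theorem key_inclusion_lemma_one
    {Y : Type*} [AddCommGroup Y] [Module ℝ Y] [TopologicalSpace Y]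
    [IsTopologicalAddGroup Y] [ContinuousSMul ℝ Y]
    (C : Set Y)
    (hCadd : ∀ x ∈ C, ∀ y ∈ C, x + y ∈ C)
    (hCsmul : ∀ (t : ℝ), 0 < t → ∀ x ∈ C, t • x ∈ C)
    (φ : Y → Set Y)
    (hne : ∀ x ∈ C, (φ x).Nonempty)
    (hsuper : ∀ x ∈ C, ∀ y ∈ C, φ x + φ y ⊆ φ (x + y))
    (hQhom : ∀ (r : ℚ), 0 < r → ∀ x ∈ C, φ ((r : ℝ) • x) = (r : ℝ) • φ x)
    (x z x₀ : Y) (hx : x ∈ C) (hz : z ∈ C) (hx₀ : x₀ ∈ C)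
    (γ : ℚ) (hγ : 1 < γ)
    (hγz : (γ : ℝ) • z = x + ((γ : ℝ) - 1) • x₀)
    (U : Set Y) (hUclosed : IsClosed U) (hUbal : Balanced ℝ U)
    (hU0 : U ∈ nhds (0 : Y))
    (n : ℕ) (hn : 0 < n)
    (hzU : φ z ⊆ (n : ℝ) • U) (hx₀U : φ x₀ ⊆ (n : ℝ) • U) :
    φ x ⊆ ((γ : ℝ) * n) • U + (((γ : ℝ) - 1) * n) • U ∧
    (∀ W : Set Y, IsOpen W → U + U ⊆ W → φ x ⊆ ((γ : ℝ) * n) • W) := by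
  have hγ0 : (0:ℝ) < (γ:ℝ) - 1 := by exact_mod_cast sub_pos.mpr hγ
  have hγpos : (0:ℝ) < (γ:ℝ) := by linarith
  -- main inclusion
  have hmain : φ x ⊆ ((γ : ℝ) * n) • U + (((γ : ℝ) - 1) * n) • U := by
    intro y hy
    obtain ⟨w, hw⟩ := hne x₀ hx₀
    have hx₀' : ((γ:ℝ) - 1) • x₀ ∈ C := hCsmul _ hγ0 _ hx₀
    have hcast : ((γ - 1 : ℚ) : ℝ) = (γ:ℝ) - 1 := by push_cast; ring
    have hφx₀ : φ (((γ:ℝ) - 1) • x₀) = ((γ:ℝ) - 1) • φ x₀ := by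
      rw [← hcast]; exact hQhom (γ - 1) (by linarith) x₀ hx₀
    have hφz : φ ((γ:ℝ) • z) = (γ:ℝ) • φ z := hQhom γ (by linarith) z hz
    have hmem : y + ((γ:ℝ) - 1) • w ∈ φ x + φ (((γ:ℝ) - 1) • x₀) := by
      exact Set.add_mem_add hy (by rw [hφx₀]; exact Set.smul_mem_smul_set hw)
    have hmem2 : y + ((γ:ℝ) - 1) • w ∈ (γ:ℝ) • φ z := by
      rw [← hφz, hγz]
      exact hsuper x hx _ hx₀' hmem
    have hmem3 : y + ((γ:ℝ) - 1) • w ∈ ((γ:ℝ) * n) • U := by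
      rw [Set.mem_smul_set] at hmem2 ⊢
      obtain ⟨v, hv, hveq⟩ := hmem2
      have := hzU hv
      rw [Set.mem_smul_set] at this
      obtain ⟨u, hu, hueq⟩ := this
      exact ⟨u, hu, by rw [← hveq, ← hueq, smul_smul]⟩
    rw [Set.mem_smul_set] at hmem3
    obtain ⟨u, hu, hueq⟩ := hmem3
    have hw' := hx₀U hw
    rw [Set.mem_smul_set] at hw'
    obtain ⟨u', hu', hueq'⟩ := hw'
    have hnegu' : -u' ∈ U := by
      have := hUbal (-1) (by norm_num)
      exact this ⟨u', hu', by simp⟩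
    refine ⟨((γ:ℝ) * n) • u, Set.smul_mem_smul_set hu,
      (((γ:ℝ) - 1) * n) • (-u'), Set.smul_mem_smul_set hnegu', ?_⟩
    have h2 : ((γ:ℝ) - 1) • w = (((γ:ℝ) - 1) * n) • u' := by
      rw [← hueq', smul_smul]
    show ((γ:ℝ) * n) • u + (((γ:ℝ) - 1) * n) • (-u') = y
    rw [smul_neg, ← h2, hueq]
    abel
  refine ⟨hmain, fun W _ hUUW => ?_⟩
  intro y hy
  obtain ⟨a, ha, b, hb, hab⟩ := hmain hy
  rw [Set.mem_smul_set] at hb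
  obtain ⟨u, hu, hueq⟩ := hb
  have hb' : b ∈ ((γ:ℝ) * n) • U := by
    rw [Set.mem_smul_set]
    refine ⟨(((γ:ℝ) - 1) / (γ:ℝ)) • u, ?_, ?_⟩
    · refine hUbal _ ?_ (Set.smul_mem_smul_set hu)
      rw [Real.norm_eq_abs, abs_of_nonneg (by positivity)]
      rw [div_le_one hγpos]; linarith
    · rw [← hueq, smul_smul]
      congr 1
      field_simp
  rw [Set.mem_smul_set] at ha hb'
  obtain ⟨a', ha', haeq⟩ := ha
  obtain ⟨b', hb'', hbeq⟩ := hb'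
  refine ⟨a' + b', hUUW (Set.add_mem_add ha' hb''), ?_⟩
  show ((γ:ℝ) * n) • (a' + b') = y
  rw [smul_add, haeq, hbeq]
  exact hab
end
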